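/- If 1 ∈ U and U contains elements u, v such that 1, u, v are pairwise non-±-equal (i.e., u ≠ ±1, v ≠ ±1, u ≠ ±v), then R(U) is closed under addition and under additive inverses; that is, R(U) is an additive subgroup of ℂ. -/

import Mathlib

open Complex

/-- The bracket `[x,y] = x * conj y - y * conj x`. -/
noncomputable def brkt (x y : ℂ) : ℂ := x * (starRingEnd ℂ) y - y * (starRingEnd ℂ) x

/-- `lineInt α β p q` is the intersection point `I_{α,β}(p,q)` of the line through `p`
with direction `α` and the line through `q` with direction `β` (for unit `α ≠ ±β`),
given by the formula of Buhler et al. -/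
noncomputable def lineInt (α β p q : ℂ) : ℂ :=
  brkt α p / brkt α β * β + brkt β q / brkt β α * α

/-- The sets `S n` in the inductive construction. -/
def stepSet (U : Set ℂ) : ℕ → Set ℂ
  | 0 => {0, 1}
  | n + 1 => {z | ∃ α ∈ U, ∃ β ∈ U, α ≠ β ∧ α ≠ -β ∧
      ∃ p ∈ stepSet U n, ∃ q ∈ stepSet U n, z = lineInt α β p q}

/-- `RU U = ⋃ n, S n`. -/
def RU (U : Set ℂ) : Set ℂ := ⋃ n, stepSet U n

/-- Elementary monomials of `U`. -/
def IsElem (U : Set ℂ) (z : ℂ) : Prop :=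
  ∃ α ∈ U, ∃ β ∈ U, α ≠ β ∧ α ≠ -β ∧ z = lineInt α β 0 1

/-- Monomials of `U`, defined inductively. -/
inductive IsMonomial (U : Set ℂ) : ℂ → Prop
  | elementary (α β : ℂ) (hα : α ∈ U) (hβ : β ∈ U) (h1 : α ≠ β) (h2 : α ≠ -β) :
      IsMonomial U (lineInt α β 0 1)
  | step (α β m : ℂ) (hα : α ∈ U) (hβ : β ∈ U) (h1 : α ≠ β) (h2 : α ≠ -β)
      (hm : IsMonomial U m) : IsMonomial U (lineInt α β 0 m)

/-- `P`: the real numbers arising as length-two monomials `I_{γ,δ}(0,z)` on the real axis. -/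
def projSet (U : Set ℂ) : Set ℝ :=
  {r | ∃ γ ∈ U, ∃ δ ∈ U, γ ≠ δ ∧ γ ≠ -δ ∧ ∃ z, IsElem U z ∧ (r : ℂ) = lineInt γ δ 0 z}

/-- `m` is a `ℤ[P]`-linear combination of elementary monomials of `U`. -/
def IsZPComb (U : Set ℂ) (m : ℂ) : Prop :=
  ∃ (n : ℕ) (c : Fin n → ℝ) (z : Fin n → ℂ),
    (∀ i, c i ∈ Subring.closure (projSet U)) ∧ (∀ i, IsElem U (z i)) ∧
    m = ∑ i, (c i : ℂ) * z i

/-- if `1 ∈ U` and `U` contains `u, v` with `1, u, v` pairwise non-±-equal,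
then `R(U)` is an additive subgroup of `ℂ`. -/
lemma brkt_conj (x y : ℂ) : (starRingEnd ℂ) (brkt x y) = - brkt x y := by
  simp [brkt, map_sub, map_mul]; ring

lemma brkt_antisymm (x y : ℂ) : brkt y x = - brkt x y := by
  unfold brkt; ring

lemma brkt_self (x : ℂ) : brkt x x = 0 := by simp [brkt]

lemma brkt_anti_ne {x y : ℂ} (h : brkt x y ≠ 0) : brkt y x ≠ 0 := by
  rw [brkt_antisymm]; exact neg_ne_zero.2 h

lemma brkt_real (x y a b : ℂ) : ∃ r : ℝ, brkt x y / brkt a b = (r : ℂ) := by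
  refine ⟨(brkt x y / brkt a b).re, ?_⟩
  have h : (starRingEnd ℂ) (brkt x y / brkt a b) = brkt x y / brkt a b := by
    rw [map_div₀, brkt_conj, brkt_conj, neg_div_neg_eq]
  exact ((Complex.conj_eq_iff_re).1 h).symm

lemma brkt_ne {α β : ℂ} (hα : ‖α‖ = 1) (hβ : ‖β‖ = 1)
    (h1 : α ≠ β) (h2 : α ≠ -β) : brkt α β ≠ 0 := by
  intro h
  have hx : α * (starRingEnd ℂ) α = 1 := by
    rw [Complex.mul_conj, Complex.normSq_eq_norm_sq, hα]; norm_num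
  have hy : β * (starRingEnd ℂ) β = 1 := by
    rw [Complex.mul_conj, Complex.normSq_eq_norm_sq, hβ]; norm_num
  have h' : α * (starRingEnd ℂ) β = β * (starRingEnd ℂ) α := by
    have h0 : α * (starRingEnd ℂ) β - β * (starRingEnd ℂ) α = 0 := h
    linear_combination h0
  have hsq : α ^ 2 = β ^ 2 := by
    linear_combination α * β * h' - α ^ 2 * hy + β ^ 2 * hx
  have : (α - β) * (α + β) = 0 := by linear_combination hsq
  rcases mul_eq_zero.mp this with h0 | h0
  · exact h1 (sub_eq_zero.mp h0)
  · exact h2 (by linear_combination h0)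

def onL (w d z : ℂ) : Prop := ∃ t : ℝ, z = w + (t : ℂ) * d

lemma brkt_cancel (x w : ℂ) (t : ℝ) : brkt x (w - (t : ℂ) * x) = brkt x w := by
  simp [brkt, map_sub, map_mul, Complex.conj_ofReal]; ring

lemma brkt_smul_left (r : ℝ) (x y : ℂ) : brkt ((r : ℂ) * x) y = (r : ℂ) * brkt x y := by
  simp [brkt, map_mul, Complex.conj_ofReal]; ring

lemma lineInt_self {α β : ℂ} (hab : brkt α β ≠ 0) (p : ℂ) : lineInt α β p p = p := by
  have hba : brkt β α ≠ 0 := brkt_anti_ne hab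
  unfold lineInt
  rw [brkt_antisymm β α] at *
  field_simp
  unfold brkt
  ring

lemma lineInt_eq_left {α β : ℂ} (hab : brkt α β ≠ 0) (p q : ℂ) :
    lineInt α β p q = p + brkt β (q - p) / brkt β α * α := by
  have hba : brkt β α ≠ 0 := brkt_anti_ne hab
  unfold lineInt
  rw [brkt_antisymm β α] at *
  field_simp
  unfold brkt
  simp only [map_sub, map_add, map_neg]
  ring

lemma lineInt_eq_right {α β : ℂ} (hab : brkt α β ≠ 0) (p q : ℂ) :
    lineInt α β p q = q + brkt α (p - q) / brkt α β * β := by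
  have hba : brkt β α ≠ 0 := brkt_anti_ne hab
  unfold lineInt
  rw [brkt_antisymm β α] at *
  field_simp
  unfold brkt
  simp only [map_sub, map_add, map_neg]
  ring

lemma onL_lineInt_left {α β : ℂ} (hab : brkt α β ≠ 0) (p q : ℂ) :
    onL p α (lineInt α β p q) := by
  obtain ⟨r, hr⟩ := brkt_real β (q - p) β α
  exact ⟨r, by rw [lineInt_eq_left hab, hr]⟩

lemma onL_lineInt_right {α β : ℂ} (hab : brkt α β ≠ 0) (p q : ℂ) :
    onL q β (lineInt α β p q) := by
  obtain ⟨r, hr⟩ := brkt_real α (p - q) α β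
  exact ⟨r, by rw [lineInt_eq_right hab, hr]⟩

lemma eq_lineInt {α β p q z : ℂ} (hab : brkt α β ≠ 0)
    (h1 : onL p α z) (h2 : onL q β z) : z = lineInt α β p q := by
  obtain ⟨s, hs⟩ := h1
  obtain ⟨t, ht⟩ := h2
  have hp : p = z - (s : ℂ) * α := by rw [hs]; ring
  have hq : q = z - (t : ℂ) * β := by rw [ht]; ring
  have e1 : brkt α p = brkt α z := by rw [hp, brkt_cancel]
  have e2 : brkt β q = brkt β z := by rw [hq, brkt_cancel]
  calc z = lineInt α β z z := (lineInt_self hab z).symm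
    _ = lineInt α β p q := by unfold lineInt; rw [e1, e2]

/-- Sum of a point on the `α`-axis and one on the `β`-axis. -/
lemma sum_axes {α β x y : ℂ} (hab : brkt α β ≠ 0)
    (hx : onL 0 α x) (hy : onL 0 β y) : x + y = lineInt β α x y := by
  obtain ⟨r, hr⟩ := hx
  obtain ⟨t, ht⟩ := hy
  refine eq_lineInt (brkt_anti_ne hab) ⟨t, by rw [ht]; ring⟩ ⟨r, by rw [hr]; ring⟩

/-- Splitting a point into its axis components. -/
lemma split_point {α β : ℂ} (hab : brkt α β ≠ 0) (p : ℂ) :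
    p = lineInt α β 0 p + lineInt β α 0 p := by
  have hba : brkt β α ≠ 0 := brkt_anti_ne hab
  set y1 := lineInt α β 0 p with hy1
  set y2 := lineInt β α 0 p with hy2
  have hy1α : onL 0 α y1 := onL_lineInt_left hab 0 p
  have hy1β : onL p β y1 := onL_lineInt_right hab 0 p
  have hy2β : onL 0 β y2 := onL_lineInt_left hba 0 p
  have hy2α : onL p α y2 := onL_lineInt_right hba 0 p
  have h1 : p = lineInt β α y1 y2 := by
    obtain ⟨t, ht⟩ := hy1β
    obtain ⟨s, hs⟩ := hy2α
    exact eq_lineInt hba ⟨-t, by rw [ht]; push_cast; ring⟩ ⟨-s, by rw [hs]; push_cast; ring⟩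
  rw [h1, ← sum_axes hab hy1α hy2β]

/-- Sum of two points on the same axis `α`, using auxiliary directions `β, γ`. -/
lemma sum_same_axis {α β γ x1 x2 : ℂ} (hab : brkt α β ≠ 0) (hag : brkt α γ ≠ 0)
    (hbg : brkt β γ ≠ 0) (hx1 : onL 0 α x1) (hx2 : onL 0 α x2) :
    x1 + x2 = lineInt γ α (lineInt β α x1 (lineInt γ β x2 0)) 0 := by
  have hgb : brkt γ β ≠ 0 := brkt_anti_ne hbg
  set y := lineInt γ β x2 0 with hy
  have hyγ : onL x2 γ y := onL_lineInt_left hgb x2 0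
  have hyβ : onL 0 β y := onL_lineInt_right hgb x2 0
  have hxy : x1 + y = lineInt β α x1 y := sum_axes hab hx1 hyβ
  rw [← hxy]
  obtain ⟨r1, hr1⟩ := hx1
  obtain ⟨r2, hr2⟩ := hx2
  obtain ⟨t1, ht1⟩ := hyγ
  refine eq_lineInt (brkt_anti_ne hag) ⟨-t1, ?_⟩ ⟨r1 + r2, ?_⟩
  · rw [ht1]; push_cast; ring
  · rw [hr1, hr2]; push_cast; ring

/-- Negation of a point on the `α`-axis. -/
lemma neg_axis {α β γ x : ℂ} (hab : brkt α β ≠ 0) (hag : brkt α γ ≠ 0)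
    (hbg : brkt β γ ≠ 0) (hx : onL 0 α x) :
    -x = lineInt β α (lineInt α γ (lineInt γ β x 0) 0) 0 := by
  have hgb : brkt γ β ≠ 0 := brkt_anti_ne hbg
  have hga : brkt γ α ≠ 0 := brkt_anti_ne hag
  set Q := lineInt γ β x 0 with hQ
  set R := lineInt α γ Q 0 with hR
  obtain ⟨r, hr⟩ := hx
  obtain ⟨t1, ht1⟩ := onL_lineInt_left hgb x 0
  obtain ⟨t2, ht2⟩ := onL_lineInt_right hgb x 0
  obtain ⟨t3, ht3⟩ := onL_lineInt_left hag Q 0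
  obtain ⟨t4, ht4⟩ := onL_lineInt_right hag Q 0
  have key : ((r + t3 : ℝ) : ℂ) * α = ((t4 - t1 : ℝ) : ℂ) * γ := by
    push_cast
    linear_combination (-ht3) + ht4 - ht1 - hr
  have h0 : ((r + t3 : ℝ) : ℂ) * brkt α γ = 0 := by
    have h := congrArg (fun w => brkt w γ) key
    simp only [brkt_smul_left, brkt_self, mul_zero] at h
    exact h
  have hc : ((r : ℂ) + (t3 : ℂ)) = 0 := by
    have := (mul_eq_zero.mp h0).resolve_right hag
    push_cast at this
    exact this
  refine eq_lineInt (brkt_anti_ne hab) ⟨-t2, ?_⟩ ⟨-r, ?_⟩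
  · push_cast
    linear_combination -hr - ht3 - ht2 - α * hc
  · rw [hr]; push_cast; ring

lemma onL_add {d x y : ℂ} (hx : onL 0 d x) (hy : onL 0 d y) : onL 0 d (x + y) := by
  obtain ⟨s, hs⟩ := hx; obtain ⟨t, ht⟩ := hy
  exact ⟨s + t, by rw [hs, ht]; push_cast; ring⟩

lemma onL_neg {d x : ℂ} (hx : onL 0 d x) : onL 0 d (-x) := by
  obtain ⟨s, hs⟩ := hx
  exact ⟨-s, by rw [hs]; push_cast; ring⟩

lemma stepSet_succ_mem {U : Set ℂ} {a b p q : ℂ} (ha : a ∈ U) (hb : b ∈ U)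
    (h1 : a ≠ b) (h2 : a ≠ -b) {n : ℕ} (hp : p ∈ stepSet U n) (hq : q ∈ stepSet U n) :
    lineInt a b p q ∈ stepSet U (n + 1) :=
  ⟨a, ha, b, hb, h1, h2, p, hp, q, hq, rfl⟩

lemma stepSet_mono {U : Set ℂ} (h1U : (1 : ℂ) ∈ U) {u : ℂ} (hu : u ∈ U)
    (h1 : (1 : ℂ) ≠ u) (h2 : (1 : ℂ) ≠ -u) (hb : brkt 1 u ≠ 0) {m n : ℕ} (h : m ≤ n) :
    stepSet U m ⊆ stepSet U n := by
  induction h with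
  | refl => exact subset_rfl
  | step h ih =>
      intro z hz
      have := stepSet_succ_mem h1U hu h1 h2 (ih hz) (ih hz)
      rwa [lineInt_self hb] at this

lemma lineInt_mem {U : Set ℂ} (h1U : (1 : ℂ) ∈ U) {u : ℂ} (hu : u ∈ U)
    (h1 : (1 : ℂ) ≠ u) (h2 : (1 : ℂ) ≠ -u) (hb1u : brkt 1 u ≠ 0)
    {a b : ℂ} (ha : a ∈ U) (hbU : b ∈ U) (hne1 : a ≠ b) (hne2 : a ≠ -b)
    {p q : ℂ} (hp : p ∈ RU U) (hq : q ∈ RU U) : lineInt a b p q ∈ RU U := by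
  obtain ⟨m, hm⟩ := Set.mem_iUnion.mp hp
  obtain ⟨n, hn⟩ := Set.mem_iUnion.mp hq
  exact Set.mem_iUnion.mpr ⟨max m n + 1,
    stepSet_succ_mem ha hbU hne1 hne2
      (stepSet_mono h1U hu h1 h2 hb1u (le_max_left m n) hm)
      (stepSet_mono h1U hu h1 h2 hb1u (le_max_right m n) hn)⟩

theorem stmt2 (U : Set ℂ) (hU : ∀ z ∈ U, ‖z‖ = 1) (h1U : (1 : ℂ) ∈ U)
    (u v : ℂ) (hu : u ∈ U) (hv : v ∈ U)
    (hu1 : u ≠ 1) (hu1' : u ≠ -1) (hv1 : v ≠ 1) (hv1' : v ≠ -1)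
    (huv : u ≠ v) (huv' : u ≠ -v) :
    ∃ G : AddSubgroup ℂ, (G : Set ℂ) = RU U := by
  have habs1 : ‖(1 : ℂ)‖ = 1 := norm_one
  have h1u : (1 : ℂ) ≠ u := Ne.symm hu1
  have h1u' : (1 : ℂ) ≠ -u := fun h => hu1' (by linear_combination h)
  have h1v : (1 : ℂ) ≠ v := Ne.symm hv1
  have h1v' : (1 : ℂ) ≠ -v := fun h => hv1' (by linear_combination h)
  have hvu : v ≠ u := Ne.symm huv
  have hvu' : v ≠ -u := fun h => huv' (by linear_combination h)
  have b1u : brkt 1 u ≠ 0 := brkt_ne habs1 (hU u hu) h1u h1u'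
  have b1v : brkt 1 v ≠ 0 := brkt_ne habs1 (hU v hv) h1v h1v'
  have buv : brkt u v ≠ 0 := brkt_ne (hU u hu) (hU v hv) huv huv'
  have bu1 : brkt u 1 ≠ 0 := brkt_anti_ne b1u
  have cl : ∀ {a b : ℂ}, a ∈ U → b ∈ U → a ≠ b → a ≠ -b →
      ∀ {p q : ℂ}, p ∈ RU U → q ∈ RU U → lineInt a b p q ∈ RU U :=
    fun {a b} ha hb h1 h2 {p q} hp hq => lineInt_mem h1U hu h1u h1u' b1u ha hb h1 h2 hp hq
  have h0 : (0 : ℂ) ∈ RU U := Set.mem_iUnion.mpr ⟨0, Or.inl rfl⟩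
  have addmem : ∀ p ∈ RU U, ∀ q ∈ RU U, p + q ∈ RU U := by
    intro p hp q hq
    have ha1 : lineInt 1 u 0 p ∈ RU U := cl h1U hu h1u h1u' h0 hp
    have ha2 : lineInt 1 u 0 q ∈ RU U := cl h1U hu h1u h1u' h0 hq
    have hb1 : lineInt u 1 0 p ∈ RU U := cl hu h1U hu1 hu1' h0 hp
    have hb2 : lineInt u 1 0 q ∈ RU U := cl hu h1U hu1 hu1' h0 hq
    have oa1 : onL 0 1 (lineInt 1 u 0 p) := onL_lineInt_left b1u 0 p
    have oa2 : onL 0 1 (lineInt 1 u 0 q) := onL_lineInt_left b1u 0 q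
    have ob1 : onL 0 u (lineInt u 1 0 p) := onL_lineInt_left bu1 0 p
    have ob2 : onL 0 u (lineInt u 1 0 q) := onL_lineInt_left bu1 0 q
    have hsA : lineInt 1 u 0 p + lineInt 1 u 0 q =
        lineInt v 1 (lineInt u 1 (lineInt 1 u 0 p) (lineInt v u (lineInt 1 u 0 q) 0)) 0 :=
      sum_same_axis b1u b1v buv oa1 oa2
    have hsB : lineInt u 1 0 p + lineInt u 1 0 q =
        lineInt v u (lineInt 1 u (lineInt u 1 0 p) (lineInt v 1 (lineInt u 1 0 q) 0)) 0 :=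
      sum_same_axis bu1 buv b1v ob1 ob2
    have mA : lineInt 1 u 0 p + lineInt 1 u 0 q ∈ RU U := by
      rw [hsA]
      exact cl hv h1U hv1 hv1'
        (cl hu h1U hu1 hu1' ha1 (cl hv hu hvu hvu' ha2 h0)) h0
    have mB : lineInt u 1 0 p + lineInt u 1 0 q ∈ RU U := by
      rw [hsB]
      exact cl hv hu hvu hvu'
        (cl h1U hu h1u h1u' hb1 (cl hv h1U hv1 hv1' hb2 h0)) h0
    have hfin : (lineInt 1 u 0 p + lineInt 1 u 0 q) + (lineInt u 1 0 p + lineInt u 1 0 q) =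
        lineInt u 1 (lineInt 1 u 0 p + lineInt 1 u 0 q) (lineInt u 1 0 p + lineInt u 1 0 q) :=
      sum_axes b1u (onL_add oa1 oa2) (onL_add ob1 ob2)
    have hpq : p + q = (lineInt 1 u 0 p + lineInt 1 u 0 q) + (lineInt u 1 0 p + lineInt u 1 0 q) := by
      conv_lhs => rw [split_point b1u p, split_point b1u q]
      ring
    rw [hpq, hfin]
    exact cl hu h1U hu1 hu1' mA mB
  have negmem : ∀ p ∈ RU U, -p ∈ RU U := by
    intro p hp
    have ha1 : lineInt 1 u 0 p ∈ RU U := cl h1U hu h1u h1u' h0 hp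
    have hb1 : lineInt u 1 0 p ∈ RU U := cl hu h1U hu1 hu1' h0 hp
    have oa1 : onL 0 1 (lineInt 1 u 0 p) := onL_lineInt_left b1u 0 p
    have ob1 : onL 0 u (lineInt u 1 0 p) := onL_lineInt_left bu1 0 p
    have hna : -(lineInt 1 u 0 p) =
        lineInt u 1 (lineInt 1 v (lineInt v u (lineInt 1 u 0 p) 0) 0) 0 :=
      neg_axis b1u b1v buv oa1
    have hnb : -(lineInt u 1 0 p) =
        lineInt 1 u (lineInt u v (lineInt v 1 (lineInt u 1 0 p) 0) 0) 0 :=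
      neg_axis bu1 buv b1v ob1
    have mna : -(lineInt 1 u 0 p) ∈ RU U := by
      rw [hna]
      exact cl hu h1U hu1 hu1'
        (cl h1U hv h1v h1v' (cl hv hu hvu hvu' ha1 h0) h0) h0
    have mnb : -(lineInt u 1 0 p) ∈ RU U := by
      rw [hnb]
      exact cl h1U hu h1u h1u'
        (cl hu hv huv huv' (cl hv h1U hv1 hv1' hb1 h0) h0) h0
    have hsum : -(lineInt 1 u 0 p) + -(lineInt u 1 0 p) =
        lineInt u 1 (-(lineInt 1 u 0 p)) (-(lineInt u 1 0 p)) :=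
      sum_axes b1u (onL_neg oa1) (onL_neg ob1)
    have hnp : -p = -(lineInt 1 u 0 p) + -(lineInt u 1 0 p) := by
      conv_lhs => rw [split_point b1u p]
      ring
    rw [hnp, hsum]
    exact cl hu h1U hu1 hu1' mna mnb
  exact ⟨{ carrier := RU U,
           zero_mem' := h0,
           add_mem' := fun {a b} ha hb => addmem a ha b hb,
           neg_mem' := fun {a} ha => negmem a ha }, rfl⟩
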